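/- Let C be a Grothendieck category and L ⊆ L′ localizing subcategories with L stable. If L′/L is stable (under essential extensions) in C/L, then L′ is stable in C. -/

import Mathlib

open CategoryTheory Limits

universe w v u u₂ u₃ u₄ u₅

namespace CentralSheaf

variable {C : Type u} [Category.{v} C] [Abelian C]

/-- A monomorphism is essential if every morphism whose precomposition with it
is a monomorphism is itself a monomorphism. -/
def IsEssentialMono {X Y : C} (f : X ⟶ Y) : Prop :=
  Mono f ∧ ∀ ⦃Z : C⦄ (g : Y ⟶ Z), Mono (f ≫ g) → Mono g

/-- A Serre subcategory of an abelian category, given as a predicate on objects: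
it contains the zero objects and is closed under isomorphisms, subobjects,
quotient objects and extensions. -/
structure IsSerre (P : C → Prop) : Prop where
  zero : ∀ X : C, IsZero X → P X
  iso : ∀ {X Y : C}, (X ≅ Y) → P X → P Y
  sub : ∀ {X Y : C} (f : X ⟶ Y), Mono f → P Y → P X
  quot : ∀ {X Y : C} (f : X ⟶ Y), Epi f → P X → P Y
  ext : ∀ S : ShortComplex C, S.ShortExact → P S.X₁ → P S.X₃ → P S.X₂

/-- A localizing subcategory: a Serre subcategory closed under arbitrary direct sums. -/
structure IsLocalizing (P : C → Prop) extends IsSerre P : Prop where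
  sums : ∀ {ι : Type v} (X : ι → C) (c : Cofan X), IsColimit c → (∀ i, P (X i)) → P c.pt

/-- Stability: closure under essential extensions. -/
def IsStable (P : C → Prop) : Prop :=
  ∀ {X Y : C} (f : X ⟶ Y), IsEssentialMono f → P X → P Y

/-- A stable localizing subcategory. -/
structure IsStableLocalizing (P : C → Prop) extends IsLocalizing P : Prop where
  stable : IsStable P

/-- Data exhibiting `D` as the Gabriel quotient `C/P` of `C` by the localizing
subcategory `P`: an exact quotient functor `T` with fully faithful right adjoint
(section functor) `S`, whose kernel is exactly `P`. -/
structure QuotientData (P : C → Prop) (D : Type u₂) [Category.{v} D] [Abelian D] where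
  T : C ⥤ D
  S : D ⥤ C
  adj : T ⊣ S
  additive : T.Additive
  preservesFiniteLimits : PreservesFiniteLimits T
  fullS : S.Full
  faithfulS : S.Faithful
  ker : ∀ X : C, P X ↔ IsZero (T.obj X)

/-- `t` is the `P`-torsion subobject of its ambient object: it lies in `P` and
contains every subobject lying in `P`. -/
def IsTorsionSubobject (P : C → Prop) {X : C} (t : Subobject X) : Prop :=
  P ((t : C)) ∧ ∀ s : Subobject X, P ((s : C)) → s ≤ t

/-- `P₃` is the smallest localizing subcategory containing `P₁` and `P₂`. -/
def IsJoin (P₁ P₂ P₃ : C → Prop) : Prop :=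
  IsLocalizing P₃ ∧ (∀ X, P₁ X → P₃ X) ∧ (∀ X, P₂ X → P₃ X) ∧
    ∀ Q : C → Prop, IsLocalizing Q → (∀ X, P₁ X → Q X) → (∀ X, P₂ X → Q X) →
      ∀ X, P₃ X → Q X

/-- An object is noetherian if its subobjects satisfy the ascending chain condition. -/
def IsNoetherianObject (X : C) : Prop := WellFoundedGT (Subobject X)

/-- A Grothendieck category is locally noetherian if it has a (separating) set of
noetherian generators. -/
def IsLocallyNoetherian (C : Type u) [Category.{v} C] [Abelian C] : Prop :=
  ∃ 𝒢 : Set C, ObjectProperty.IsSeparating (fun X => X ∈ 𝒢) ∧ ∀ G ∈ 𝒢, IsNoetherianObject G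


section Aux

lemma isZero_of_mono_eq_zero {A B : C} (f : A ⟶ B) (hm : Mono f) (h : f = 0) : IsZero A := by
  rw [IsZero.iff_id_eq_zero, ← cancel_mono f, h, comp_zero, zero_comp]

/-- The pullback of an essential monomorphism along a monomorphism is essential. -/
lemma isEssentialMono_pullback_snd {X Y W : C} (f : X ⟶ Y) (w : W ⟶ Y) (hw : Mono w)
    (hf : IsEssentialMono f) : IsEssentialMono (pullback.snd f w) := by
  obtain ⟨hm, hess⟩ := hf
  haveI : Mono f := hm
  haveI : Mono w := hw
  refine ⟨inferInstance, ?_⟩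
  intro Z h hmono
  have hm0 : kernel.ι h ≫ w = 0 := by
    haveI : Mono (kernel.ι h ≫ w) := mono_comp _ _
    have hfq : Mono (f ≫ cokernel.π (kernel.ι h ≫ w)) := by
      rw [Preadditive.mono_iff_cancel_zero]
      intro A t ht
      have ht' : (t ≫ f) ≫ cokernel.π (kernel.ι h ≫ w) = 0 := by
        rw [Category.assoc]; exact ht
      have hs : Abelian.monoLift (kernel.ι h ≫ w) (t ≫ f) ht' ≫ (kernel.ι h ≫ w) = t ≫ f :=
        Abelian.monoLift_comp _ _ _
      have hℓeq : (t ≫ f) = (Abelian.monoLift (kernel.ι h ≫ w) (t ≫ f) ht' ≫ kernel.ι h) ≫ w := by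
        rw [Category.assoc]; exact hs.symm
      have hl1 : pullback.lift t _ hℓeq ≫ pullback.fst f w = t := pullback.lift_fst _ _ _
      have hl2 : pullback.lift t _ hℓeq ≫ pullback.snd f w =
          Abelian.monoLift (kernel.ι h ≫ w) (t ≫ f) ht' ≫ kernel.ι h := pullback.lift_snd _ _ _
      have hz : pullback.lift t _ hℓeq ≫ (pullback.snd f w ≫ h) = 0 := by
        rw [← Category.assoc, hl2, Category.assoc, kernel.condition, comp_zero]
      have hℓ0 : pullback.lift t _ hℓeq = 0 := zero_of_comp_mono _ hz
      rw [← hl1, hℓ0, zero_comp]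
    haveI := hess _ hfq
    exact zero_of_comp_mono (cokernel.π (kernel.ι h ≫ w)) (cokernel.condition _)
  have hki : kernel.ι h = 0 := zero_of_comp_mono w hm0
  exact Preadditive.mono_of_kernel_zero hki

/-- Membership in a localizing subcategory transfers along a morphism whose kernel and
cokernel lie in the subcategory. -/
lemma mem_iff_of_ker_coker {P' : C → Prop} (hP' : IsLocalizing P') {A B : C} (u : A ⟶ B)
    (h1 : P' (kernel u)) (h2 : P' (cokernel u)) : P' A ↔ P' B := by
  constructor
  · intro hA
    have hco : P' (Abelian.coimage u) := hP'.quot (Abelian.coimage.π u) inferInstance hA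
    have him : P' (Abelian.image u) := hP'.iso (Abelian.coimageIsoImage u) hco
    exact hP'.ext (ShortComplex.mk (Abelian.image.ι u) (cokernel.π u) (kernel.condition _))
      { exact := ShortComplex.exact_of_f_is_kernel _ (kernelIsKernel _) } him h2
  · intro hB
    have him : P' (Abelian.image u) := hP'.sub (Abelian.image.ι u) inferInstance hB
    have hco : P' (Abelian.coimage u) := hP'.iso (Abelian.coimageIsoImage u).symm him
    exact hP'.ext (ShortComplex.mk (kernel.ι u) (Abelian.coimage.π u) (cokernel.condition _))
      { exact := ShortComplex.exact_of_g_is_cokernel _ (cokernelIsCokernel _) } h1 hco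

end Aux

/-- Let `L ⊆ L′` be localizing subcategories of a Grothendieck
category `C` with `L` stable. If the image `L′/L` of `L′` in `C/L` is stable,
then `L′` is stable in `C`. -/
theorem stable_of_quotient_stable
    [HasColimits C] [AB5 C] (hsep : ∃ G : C, IsSeparator G)
    {D : Type u₂} [Category.{v} D] [Abelian D]
    (P P' : C → Prop) (hP : IsStableLocalizing P) (hP' : IsLocalizing P')
    (hle : ∀ X, P X → P' X) (Q : QuotientData P D)
    (P'' : D → Prop)
    (hP'' : ∀ Y : D, P'' Y ↔ ∃ X : C, P' X ∧ Nonempty (Q.T.obj X ≅ Y))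
    (hst : IsStable P'') :
    IsStable P' :=  by
  haveI := Q.fullS
  haveI := Q.faithfulS
  haveI := Q.preservesFiniteLimits
  haveI := Q.additive
  haveI : PreservesColimits Q.T := Q.adj.leftAdjoint_preservesColimits
  haveI : PreservesLimits Q.S := Q.adj.rightAdjoint_preservesLimits
  -- `T.map` of each unit component is an isomorphism
  have hunit : ∀ A : C, IsIso (Q.T.map (Q.adj.unit.app A)) := by
    intro A
    have htri : Q.T.map (Q.adj.unit.app A) ≫ Q.adj.counit.app (Q.T.obj A) = 𝟙 _ :=
      Q.adj.left_triangle_components A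
    haveI : IsIso (Q.T.map (Q.adj.unit.app A) ≫ Q.adj.counit.app (Q.T.obj A)) := by
      rw [htri]; infer_instance
    exact IsIso.of_isIso_comp_right (Q.T.map (Q.adj.unit.app A)) (Q.adj.counit.app (Q.T.obj A))
  -- the kernel and cokernel of each unit component lie in `P`
  have hker : ∀ A : C, P (kernel (Q.adj.unit.app A)) := by
    intro A
    rw [Q.ker]
    haveI := hunit A
    exact (isZero_zero D).of_iso (PreservesKernel.iso Q.T _ ≪≫ kernel.ofMono _)
  have hcoker : ∀ A : C, P (cokernel (Q.adj.unit.app A)) := by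
    intro A
    rw [Q.ker]
    haveI := hunit A
    exact (isZero_zero D).of_iso (PreservesCokernel.iso Q.T _ ≪≫ cokernel.ofEpi _)
  have htrans : ∀ A : C, P' A ↔ P' (Q.S.obj (Q.T.obj A)) := fun A =>
    mem_iff_of_ker_coker hP' (Q.adj.unit.app A) (hle _ (hker A)) (hle _ (hcoker A))
  intro X Y f hf hX
  obtain ⟨hfm, hfe⟩ := hf
  haveI : Mono f := hfm
  -- `T.map f` is an essential monomorphism
  have hTf : IsEssentialMono (Q.T.map f) := by
    refine ⟨inferInstance, ?_⟩
    intro Z g hg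
    haveI := hunit Y
    -- `w : W ⟶ Y` is the preimage in `Y` of the kernel of `g`
    have hTw : Q.T.map (pullback.fst (Q.adj.unit.app Y) (Q.S.map (kernel.ι g))) ≫ g = 0 := by
      have h1 : pullback.fst (Q.adj.unit.app Y) (Q.S.map (kernel.ι g)) ≫ Q.adj.unit.app Y =
          pullback.snd _ _ ≫ Q.S.map (kernel.ι g) := pullback.condition
      have h2 := congrArg (fun t => Q.T.map t ≫ Q.adj.counit.app (Q.T.obj Y) ≫ g) h1
      simp only [Functor.map_comp, Category.assoc] at h2
      have hnat := Q.adj.counit.naturality (kernel.ι g)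
      simp only [Functor.comp_map, Functor.id_map] at hnat
      have htri := Q.adj.left_triangle_components Y
      rw [reassoc_of% htri] at h2
      rw [h2, reassoc_of% hnat, kernel.condition, comp_zero, comp_zero]
    -- the intersection with `X` lies in `P`
    have hV : P (pullback f (pullback.fst (Q.adj.unit.app Y) (Q.S.map (kernel.ι g)))) := by
      rw [Q.ker]
      have hz : Q.T.map (pullback.fst f (pullback.fst (Q.adj.unit.app Y)
          (Q.S.map (kernel.ι g)))) ≫ (Q.T.map f ≫ g) = 0 := by
        rw [← Category.assoc, ← Functor.map_comp, pullback.condition, Functor.map_comp,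
          Category.assoc, hTw, comp_zero]
      have h0 : Q.T.map (pullback.fst f (pullback.fst (Q.adj.unit.app Y)
          (Q.S.map (kernel.ι g)))) = 0 := zero_of_comp_mono _ hz
      exact isZero_of_mono_eq_zero _ inferInstance h0
    -- hence the whole preimage lies in `P` by stability
    have hW : P (pullback (Q.adj.unit.app Y) (Q.S.map (kernel.ι g))) :=
      hP.stable _ (isEssentialMono_pullback_snd f _ inferInstance ⟨hfm, hfe⟩) hV
    have hTW : IsZero (Q.T.obj (pullback (Q.adj.unit.app Y) (Q.S.map (kernel.ι g)))) :=
      (Q.ker _).mp hW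
    -- the kernel of `g` embeds into the image of `W`, hence is zero
    have hab : (inv (Q.adj.counit.app (kernel g)) ≫ Q.T.map (Q.S.map (kernel.ι g)) ≫
        inv (Q.T.map (Q.adj.unit.app Y))) ≫ Q.T.map (Q.adj.unit.app Y) =
        inv (Q.adj.counit.app (kernel g)) ≫ Q.T.map (Q.S.map (kernel.ι g)) := by
      simp
    have hℓsnd : pullback.lift _ _ hab ≫ pullback.snd (Q.T.map (Q.adj.unit.app Y))
        (Q.T.map (Q.S.map (kernel.ι g))) = inv (Q.adj.counit.app (kernel g)) :=
      pullback.lift_snd _ _ _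
    haveI : Mono (pullback.lift _ _ hab ≫ pullback.snd (Q.T.map (Q.adj.unit.app Y))
        (Q.T.map (Q.S.map (kernel.ι g)))) := by
      rw [hℓsnd]; infer_instance
    haveI hmℓ : Mono (pullback.lift _ _ hab) :=
      mono_of_mono (pullback.lift _ _ hab) (pullback.snd _ _)
    have hzero : pullback.lift _ _ hab ≫
        (PreservesPullback.iso Q.T (Q.adj.unit.app Y) (Q.S.map (kernel.ι g))).inv = 0 :=
      hTW.eq_of_tgt _ _
    have hK : IsZero (kernel g) :=
      isZero_of_mono_eq_zero _ (mono_comp _ _) hzero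
    exact Preadditive.mono_of_kernel_zero (hK.eq_of_src _ _)
  -- conclude using stability of `P''`
  have hTX : P'' (Q.T.obj X) := (hP'' _).mpr ⟨X, hX, ⟨Iso.refl _⟩⟩
  have hTY : P'' (Q.T.obj Y) := hst _ hTf hTX
  obtain ⟨X₀, hX₀, ⟨e⟩⟩ := (hP'' _).mp hTY
  have h1 : P' (Q.S.obj (Q.T.obj X₀)) := (htrans X₀).mp hX₀
  have h2 : P' (Q.S.obj (Q.T.obj Y)) := hP'.iso (Q.S.mapIso e) h1
  exact (htrans Y).mpr h2


end CentralSheaf
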